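/- Fix k ≥ 2, a real symmetric positive definite k×k matrix Σ and μ ∈ ℝ^k, and suppose s > 0, R_GMV > 0, γ > 0 and γ ≥ γ_min. Let X = X(γ), Y = Y(γ), and define ω* = Σ⁻¹[ (−𝟏 + (γ+1)μ/X)·(Y/γ) − X·μ ]. Then ω* = ω_GMV + ((X − R_GMV)/s)·Qμ, where ω_GMV = Σ⁻¹𝟏/(𝟏ᵀΣ⁻¹𝟏). In particular, the optimal power-utility portfolio lies on the set of feasible mean-variance portfolios. -/

import Mathlib

open Matrix

lemma vecMulVec_mulVec {k : ℕ} (u v x : Fin k → ℝ) :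
    vecMulVec u v *ᵥ x = (v ⬝ᵥ x) • u := by
  ext i
  simp [vecMulVec, mulVec, dotProduct, Finset.mul_sum, mul_comm, mul_assoc, mul_left_comm]

set_option maxHeartbeats 2000000 in
/-- Under the conditions of the power-utility optimization, the optimal
portfolio `ω* = Σ⁻¹[(−𝟏 + (γ+1)μ/X)·(Y/γ) − X·μ]` can be written in Markowitz form
`ω* = ω_GMV + ((X − R_GMV)/s)·Qμ`, with `ω_GMV = Σ⁻¹𝟏/(𝟏ᵀΣ⁻¹𝟏)`; in particular it
lies on the set of feasible mean-variance portfolios. -/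
theorem power_utility_portfolio_on_feasible_parabola
    {k : ℕ} (hk : 2 ≤ k)
    (S : Matrix (Fin k) (Fin k) ℝ) (hS : S.PosDef) (μ : Fin k → ℝ)
    (one : Fin k → ℝ) (hone : one = fun _ => (1 : ℝ))
    (R V : ℝ)
    (hR : R = (one ⬝ᵥ (S⁻¹ *ᵥ μ)) / (one ⬝ᵥ (S⁻¹ *ᵥ one)))
    (hV : V = (one ⬝ᵥ (S⁻¹ *ᵥ one))⁻¹)
    (Q : Matrix (Fin k) (Fin k) ℝ)
    (hQ : Q = S⁻¹ - (one ⬝ᵥ (S⁻¹ *ᵥ one))⁻¹ • vecMulVec (S⁻¹ *ᵥ one) (one ᵥ* S⁻¹))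
    (s : ℝ) (hs : s = μ ⬝ᵥ (Q *ᵥ μ))
    (hspos : 0 < s) (hRpos : 0 < R)
    (γ γmin : ℝ) (hγ : 0 < γ)
    (hγmin : γmin = 2 * s + 2 * (s * (1 + s) * V / R ^ 2 +
      Real.sqrt (s * (1 + s) * (1 + s * V / R ^ 2) * (1 + (1 + s) * V / R ^ 2))))
    (hγγ : γmin ≤ γ)
    (D X Y : ℝ)
    (hD : D = (γ + 2) ^ 2 * R ^ 2 - 4 * (γ + 1) * (1 + s) * (R ^ 2 + s * V))
    (hX : X = ((γ + 2) * R - Real.sqrt D) / (2 * (1 + s)))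
    (hY : Y = (γ / s) * (X * R - R ^ 2 - s * V))
    (ω ωGMV : Fin k → ℝ)
    (hω : ω = S⁻¹ *ᵥ ((Y / γ) • (-one + ((γ + 1) / X) • μ) - X • μ))
    (hωGMV : ωGMV = (one ⬝ᵥ (S⁻¹ *ᵥ one))⁻¹ • (S⁻¹ *ᵥ one)) :
    ω = ωGMV + ((X - R) / s) • (Q *ᵥ μ) := by
  have hone0 : one ≠ 0 := by
    rw [hone]
    intro h
    have := congrFun h ⟨0, by omega⟩
    simp at this
  have hSi : (S⁻¹).PosDef := hS.inv
  set a : ℝ := one ⬝ᵥ (S⁻¹ *ᵥ one) with ha_def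
  set b : ℝ := one ⬝ᵥ (S⁻¹ *ᵥ μ) with hb_def
  have hapos : 0 < a := by
    have := hSi.re_dotProduct_pos hone0
    simpa using this
  have ha0 : a ≠ 0 := ne_of_gt hapos
  have hVpos : 0 < V := by rw [hV]; positivity
  have hspos' : (0:ℝ) < 1 + s := by linarith
  -- D is nonnegative
  have hDnn : 0 ≤ D := by
    set p : ℝ := s * (R ^ 2 + (1 + s) * V) with hp_def
    have hppos : 0 < p := by positivity
    set q : ℝ := Real.sqrt (s * (1 + s) * (1 + s * V / R ^ 2) * (1 + (1 + s) * V / R ^ 2)) with hq_def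
    have hqnn : 0 ≤ q := Real.sqrt_nonneg _
    have hqsq : q ^ 2 = s * (1 + s) * (1 + s * V / R ^ 2) * (1 + (1 + s) * V / R ^ 2) := by
      rw [hq_def]
      exact Real.sq_sqrt (by positivity)
    have hR2 : (0:ℝ) < R ^ 2 := by positivity
    have hkey : R ^ 2 * γ - 2 * p ≥ 2 * (R ^ 2 * q) := by
      have h1 : R ^ 2 * γmin = 2 * p + 2 * (R ^ 2 * q) := by
        rw [hγmin, hp_def]
        field_simp
        ring
      nlinarith [mul_le_mul_of_nonneg_left hγγ (le_of_lt hR2)]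
    have hq2 : (R ^ 2 * q) ^ 2 = p * (p + R ^ 2) := by
      rw [mul_pow, hqsq, hp_def]
      field_simp
      ring
    have hD2 : D = R ^ 2 * γ ^ 2 - 4 * p * (γ + 1) := by
      rw [hD, hp_def]; ring
    have h5 : 4 * (p * (p + R ^ 2)) ≤ (R ^ 2 * γ - 2 * p) ^ 2 := by
      nlinarith [mul_self_le_mul_self (by positivity : (0:ℝ) ≤ 2 * (R ^ 2 * q)) hkey]
    have h6 : 0 ≤ R ^ 2 * D := by rw [hD2]; nlinarith [h5]
    exact (mul_nonneg_iff_of_pos_left hR2).mp h6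
  have hsd : Real.sqrt D ^ 2 = D := Real.sq_sqrt hDnn
  have hsdnn : 0 ≤ Real.sqrt D := Real.sqrt_nonneg D
  have hsdlt : Real.sqrt D < (γ + 2) * R := by
    have hDlt : D < ((γ + 2) * R) ^ 2 := by
      rw [hD]
      have : 0 < 4 * (γ + 1) * (1 + s) * (R ^ 2 + s * V) := by positivity
      nlinarith
    exact (Real.sqrt_lt' (by positivity)).mpr hDlt
  have hXpos : 0 < X := by
    rw [hX]
    have : 0 < (γ + 2) * R - Real.sqrt D := by linarith
    positivity
  have hX0 : X ≠ 0 := ne_of_gt hXpos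
  have hγ0 : γ ≠ 0 := ne_of_gt hγ
  have hs0 : s ≠ 0 := ne_of_gt hspos
  have hquad : (1 + s) * X ^ 2 - (γ + 2) * R * X + (γ + 1) * (R ^ 2 + s * V) = 0 := by
    have h2X : 2 * (1 + s) * X = (γ + 2) * R - Real.sqrt D := by
      rw [hX]; field_simp
    have hsub : Real.sqrt D = (γ + 2) * R - 2 * (1 + s) * X := by linarith
    have := hsd
    rw [hsub, hD] at this
    nlinarith [this]
  -- Q applied to μ
  have hvm : one ᵥ* S⁻¹ = S⁻¹ *ᵥ one := by
    have hSt : Sᵀ = S := by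
      have h := hS.isHermitian.eq
      rwa [conjTranspose_eq_transpose_of_trivial] at h
    rw [← mulVec_transpose, transpose_nonsing_inv, hSt]
  have hQμ : Q *ᵥ μ = (S⁻¹ *ᵥ μ) - (a⁻¹ * b) • (S⁻¹ *ᵥ one) := by
    rw [hQ, sub_mulVec, smul_mulVec, vecMulVec_mulVec, hvm]
    have : (S⁻¹ *ᵥ one) ⬝ᵥ μ = b := by
      rw [hb_def, dotProduct_mulVec, hvm, dotProduct_comm]
    rw [this, smul_smul]
  rw [hω, hωGMV, hQμ, mulVec_sub, mulVec_smul, mulVec_add, mulVec_neg, mulVec_smul, mulVec_smul]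
  have hRa : R = b / a := hR
  have hVa : V = a⁻¹ := hV
  match_scalars
  · -- coefficient of S⁻¹ *ᵥ one
    rw [hY, hRa, hVa]
    field_simp
    ring
  · -- coefficient of S⁻¹ *ᵥ μ
    rw [hY]
    field_simp
    linear_combination (-1) * hquad
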